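/- Assume in addition that q^N = (-1)^{N+1}. Let (μ, ν) be a regular pair of standard Weyl pairs, and set P = X_μ^{-1}⊗Id + Y_μ⊗Y_ν^{-1} and Q = q^{-1}·Y_μ⊗X_ν^{-1}Y_ν^{-1} in End(ℂ^N ⊗ ℂ^N). Then P^N = (x_μ^{-1} + y_μ·y_ν^{-1})·Id and Q^N = (y_μ·x_ν^{-1}·y_ν^{-1})·Id; consequently the operators X̂ : f ↦ P^{-1}∘f and Ŷ : f ↦ Q∘f on the Clebsch–Gordan space V_{(μ,ν)} satisfy X̂^N = (x_μ^{-1} + y_μ·y_ν^{-1})^{-1}·Id and Ŷ^N = (y_μ·x_ν^{-1}·y_ν^{-1})·Id. -/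
import Mathlib


open TensorProduct

noncomputable section

/-- ℂ^N: functions from ℤ/Nℤ to ℂ. -/
abbrev CN (N : ℕ) := ZMod N → ℂ

/-- The operator A with A e_k = q^{2k} e_k. -/
def opA (q : ℂ) (N : ℕ) : Module.End ℂ (CN N) where
  toFun f := fun k => q ^ (2 * k.val) * f k
  map_add' f g := by funext k; simp [mul_add]
  map_smul' c f := by funext k; simp [smul_eq_mul]; ring

/-- The operator B with B e_k = e_{k+1}. -/
def opB (N : ℕ) : Module.End ℂ (CN N) where
  toFun f := fun k => f (k - 1)
  map_add' f g := by funext k; simp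
  map_smul' c f := by funext k; simp

/-- The operator C with C e_k = q^{1-2k} e_{k-1}, i.e. (C f)(k) = q^{-1-2k} f(k+1). -/
def opC (q : ℂ) (N : ℕ) : Module.End ℂ (CN N) where
  toFun f := fun k => q ^ (-1 - 2 * (k.val : ℤ)) * f (k + 1)
  map_add' f g := by funext k; simp [mul_add]
  map_smul' c f := by funext k; simp [smul_eq_mul]; ring

/-- A Weyl pair: invertible endomorphisms with X Y = q² Y X. -/
def IsWeylPair (q : ℂ) {V : Type*} [AddCommMonoid V] [Module ℂ V]
    (X Y : Module.End ℂ V) : Prop :=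
  IsUnit X ∧ IsUnit Y ∧ X * Y = q ^ 2 • (Y * X)

/-- A subspace invariant under both X and Y. -/
def WeylInvariant {V : Type*} [AddCommMonoid V] [Module ℂ V]
    (X Y : Module.End ℂ V) (W : Submodule ℂ V) : Prop :=
  (∀ v ∈ W, X v ∈ W) ∧ (∀ v ∈ W, Y v ∈ W)

/-- An irreducible Weyl pair. -/
def IsIrreducibleWeylPair (q : ℂ) {V : Type*} [AddCommMonoid V] [Module ℂ V]
    (X Y : Module.End ℂ V) : Prop :=
  IsWeylPair q X Y ∧ Nontrivial V ∧
    ∀ W : Submodule ℂ V, WeylInvariant X Y W → W = ⊥ ∨ W = ⊤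
/-- The Clebsch–Gordan space of a pair of Weyl pairs: all linear maps
f : ℂ^N → ℂ^N ⊗ ℂ^N with f∘X_{αβ} = (X_α⊗X_β)∘f and
f∘Y_{αβ} = (X_α⁻¹⊗Y_β + Y_α⊗Id)∘f. -/
def CGsub (N : ℕ) (Xa Ya Xb Yb Xab Yab : Module.End ℂ (CN N)) :
    Submodule ℂ (CN N →ₗ[ℂ] (CN N ⊗[ℂ] CN N)) where
  carrier := {f | f ∘ₗ Xab = (TensorProduct.map Xa Xb) ∘ₗ f ∧
    f ∘ₗ Yab = (TensorProduct.map (Ring.inverse Xa) Yb + TensorProduct.map Ya 1) ∘ₗ f}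
  add_mem' := by
    rintro f g ⟨hf1, hf2⟩ ⟨hg1, hg2⟩
    constructor <;> simp only [LinearMap.add_comp, LinearMap.comp_add, hf1, hf2, hg1, hg2]
  zero_mem' := by constructor <;> simp
  smul_mem' := by
    rintro c f ⟨hf1, hf2⟩
    constructor <;> simp only [LinearMap.smul_comp, LinearMap.comp_smul, hf1, hf2]

namespace Stmt18Aux
open Finset

open Finset

/-- Gaussian binomial coefficients via the Pascal-type recurrence. -/
def gb (ζ : ℂ) : ℕ → ℕ → ℂ
  | 0, 0 => 1
  | 0, _+1 => 0
  | _+1, 0 => 1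
  | n+1, k+1 => gb ζ n k + ζ^(k+1) * gb ζ n (k+1)

lemma gb_zero_right (ζ : ℂ) (n : ℕ) : gb ζ n 0 = 1 := by cases n <;> rfl

lemma gb_succ_succ (ζ : ℂ) (n k : ℕ) :
    gb ζ (n+1) (k+1) = gb ζ n k + ζ^(k+1) * gb ζ n (k+1) := rfl

lemma gb_eq_zero_of_lt (ζ : ℂ) : ∀ n k, n < k → gb ζ n k = 0
  | 0, _+1, _ => rfl
  | n+1, k+1, h => by
      rw [gb_succ_succ, gb_eq_zero_of_lt ζ n k (by omega),
        gb_eq_zero_of_lt ζ n (k+1) (by omega)]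
      ring

lemma gb_diag (ζ : ℂ) : ∀ n, gb ζ n n = 1
  | 0 => rfl
  | n+1 => by
      rw [gb_succ_succ, gb_diag ζ n, gb_eq_zero_of_lt ζ n (n+1) (by omega)]
      ring

lemma gb_prod (ζ : ℂ) : ∀ n k : ℕ,
    (∏ i ∈ range k, (1 - ζ^(i+1))) * gb ζ n k = ∏ i ∈ range k, (1 - ζ^(n-i))
  | 0, 0 => by simp [gb]
  | 0, k+1 => by
      rw [gb_eq_zero_of_lt ζ 0 (k+1) (by omega), mul_zero]
      exact (Finset.prod_eq_zero (Finset.mem_range.2 (Nat.succ_pos k)) (by simp)).symm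
  | n+1, 0 => by simp [gb_zero_right]
  | n+1, j+1 => by
      have h1 := gb_prod ζ n j
      have h2 := gb_prod ζ n (j+1)
      by_cases hj : j ≤ n
      · have key : ζ^(j+1) * ζ^(n-j) = ζ^(n+1) := by
          rw [← pow_add]; congr 1; omega
        rw [gb_succ_succ, prod_range_succ]
        rw [prod_range_succ, prod_range_succ] at h2
        have hR : ∏ i ∈ range (j+1), (1 - ζ^(n+1-i))
            = (∏ i ∈ range j, (1 - ζ^(n-i))) * (1 - ζ^(n+1)) := by
          rw [prod_range_succ']
          simp only [Nat.succ_sub_succ_eq_sub, Nat.sub_zero]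
        rw [hR]
        linear_combination (1 - ζ^(j+1)) * h1 + ζ^(j+1) * h2
          - (∏ i ∈ range j, (1 - ζ^(n-i))) * key
      · rw [gb_eq_zero_of_lt ζ (n+1) (j+1) (by omega), mul_zero]
        exact (Finset.prod_eq_zero (Finset.mem_range.2 (by omega : n+1 < j+1)) (by simp)).symm

lemma gb_vanish {ζ : ℂ} {N k : ℕ} (hζ : IsPrimitiveRoot ζ N) (h0 : 0 < k) (hk : k < N) :
    gb ζ N k = 0 := by
  have h := gb_prod ζ N k
  have hD : (∏ i ∈ range k, (1 - ζ^(i+1))) ≠ 0 := by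
    rw [Finset.prod_ne_zero_iff]
    intro i hi
    have hi' : i < k := Finset.mem_range.1 hi
    exact sub_ne_zero.2 fun hh =>
      hζ.pow_ne_one_of_pos_of_lt (by omega) (by omega) hh.symm
  have hR : ∏ i ∈ range k, (1 - ζ^(N-i)) = 0 :=
    Finset.prod_eq_zero (Finset.mem_range.2 h0) (by simp [hζ.pow_eq_one])
  rw [hR] at h
  exact (mul_eq_zero.1 h).resolve_left hD

lemma qpow_comm {R : Type*} [Ring R] [Algebra ℂ R] {ζ : ℂ} {x y : R}
    (h : y * x = ζ • (x * y)) : ∀ k : ℕ, y * x^k = ζ^k • (x^k * y)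
  | 0 => by simp
  | k+1 => by
      rw [pow_succ, ← mul_assoc, qpow_comm h k, smul_mul_assoc, mul_assoc, h,
        mul_smul_comm, smul_smul, ← mul_assoc, ← pow_succ, ← pow_succ]

lemma qbinom_expand {R : Type*} [Ring R] [Algebra ℂ R] (ζ : ℂ) (x y : R)
    (h : y * x = ζ • (x * y)) :
    ∀ n : ℕ, (x + y)^n = ∑ k ∈ range (n+1), gb ζ n k • (x^k * y^(n-k))
  | 0 => by simp [gb]
  | n+1 => by
      rw [pow_succ', qbinom_expand ζ x y h n, add_mul, Finset.mul_sum, Finset.mul_sum]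
      have hx : ∀ k ∈ range (n+1), x * (gb ζ n k • (x^k * y^(n-k)))
          = gb ζ n k • (x^(k+1) * y^(n-k)) := by
        intro k hk
        rw [mul_smul_comm, ← mul_assoc, ← pow_succ']
      have hy : ∀ k ∈ range (n+1), y * (gb ζ n k • (x^k * y^(n-k)))
          = (ζ^k * gb ζ n k) • (x^k * y^(n+1-k)) := by
        intro k hk
        have hk' : k ≤ n := by have := Finset.mem_range.1 hk; omega
        rw [mul_smul_comm, ← mul_assoc, qpow_comm h k, smul_mul_assoc, mul_assoc,
          ← pow_succ', smul_smul, mul_comm (gb ζ n k) (ζ^k),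
          show n - k + 1 = n + 1 - k by omega]
      rw [Finset.sum_congr rfl hx, Finset.sum_congr rfl hy]
      have e1 : ∑ k ∈ range (n+1+1), (ζ^k * gb ζ n k) • (x^k * y^(n+1-k))
          = ∑ k ∈ range (n+1), (ζ^(k+1) * gb ζ n (k+1)) • (x^(k+1) * y^(n+1-(k+1)))
            + (ζ^0 * gb ζ n 0) • (x^0 * y^(n+1-0)) :=
        Finset.sum_range_succ' _ (n+1)
      have e2 : ∑ k ∈ range (n+1+1), (ζ^k * gb ζ n k) • (x^k * y^(n+1-k))
          = ∑ k ∈ range (n+1), (ζ^k * gb ζ n k) • (x^k * y^(n+1-k))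
            + (ζ^(n+1) * gb ζ n (n+1)) • (x^(n+1) * y^(n+1-(n+1))) :=
        Finset.sum_range_succ _ (n+1)
      rw [gb_eq_zero_of_lt ζ n (n+1) (by omega), mul_zero, zero_smul, add_zero] at e2
      rw [Finset.sum_range_succ' (fun k => gb ζ (n+1) k • (x^k * y^(n+1-k))) (n+1)]
      simp only [gb_succ_succ, gb_zero_right, add_smul, Finset.sum_add_distrib, one_smul,
        pow_zero, one_mul, Nat.sub_zero, Nat.succ_sub_succ_eq_sub] at e1 ⊢
      rw [add_assoc, ← e1, e2]


lemma qbinom {R : Type*} [Ring R] [Algebra ℂ R] {ζ : ℂ} {N : ℕ} (hN : 1 ≤ N)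
    (hζ : IsPrimitiveRoot ζ N) (x y : R) (h : y * x = ζ • (x * y)) :
    (x + y)^N = x^N + y^N := by
  rw [qbinom_expand ζ x y h N, Finset.sum_range_succ, gb_diag, Nat.sub_self, pow_zero,
    mul_one, one_smul]
  have hrest : ∑ k ∈ range N, gb ζ N k • (x^k * y^(N-k)) = y^N := by
    rw [Finset.sum_eq_single_of_mem 0 (Finset.mem_range.2 (by omega))]
    · simp [gb_zero_right]
    · intro k hk h0
      rw [gb_vanish hζ (by omega) (Finset.mem_range.1 hk), zero_smul]
  rw [hrest, add_comm]



/-- The inverse shift. -/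
def opBi (N : ℕ) : Module.End ℂ (CN N) where
  toFun f := fun k => f (k + 1)
  map_add' f g := by funext k; simp
  map_smul' c f := by funext k; simp

lemma opA_apply (q : ℂ) (N : ℕ) (f : CN N) (k : ZMod N) :
    opA q N f k = q ^ (2 * k.val) * f k := rfl
lemma opB_apply (N : ℕ) (f : CN N) (k : ZMod N) : opB N f k = f (k - 1) := rfl
lemma opBi_apply (N : ℕ) (f : CN N) (k : ZMod N) : opBi N f k = f (k + 1) := rfl

lemma end_ext {N : ℕ} {S T : Module.End ℂ (CN N)}
    (h : ∀ f k, S f k = T f k) : S = T :=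
  LinearMap.ext fun f => funext fun k => h f k

/-- Helper: compute Ring.inverse from a two-sided inverse. -/
lemma ring_inverse_eq {M : Type*} [MonoidWithZero M] {a b : M}
    (h1 : a * b = 1) (h2 : b * a = 1) : Ring.inverse a = b := by
  rw [show a = ((⟨a, b, h1, h2⟩ : Mˣ) : M) from rfl, Ring.inverse_unit]
  rfl

lemma pow_mod {ζ : ℂ} {N : ℕ} (hζ : ζ^N = 1) (a : ℕ) : ζ^(a % N) = ζ^a := by
  conv_rhs => rw [← Nat.div_add_mod a N]
  rw [pow_add, pow_mul, hζ, one_pow, one_mul]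

lemma pow_val_succ {N : ℕ} [NeZero N] {ζ : ℂ} (hζ : ζ^N = 1) (j : ZMod N) :
    ζ^((j+1).val) = ζ * ζ^(j.val) := by
  rw [ZMod.val_add, pow_mod hζ, pow_add, ZMod.val_one_eq_one_mod, pow_mod hζ, pow_one,
    mul_comm]

-- A * B = q^2 • (B * A)
lemma hAB {N : ℕ} [NeZero N] {q : ℂ} (hζ : (q^2)^N = 1) :
    opA q N * opB N = (q^2) • (opB N * opA q N) := by
  apply end_ext; intro f k
  have h := pow_val_succ hζ (k - 1)
  rw [sub_add_cancel] at h
  simp only [Module.End.mul_apply, LinearMap.smul_apply, opA_apply, opB_apply]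
  show q ^ (2 * k.val) * f (k-1) = (q^2) • (q ^ (2 * (k-1).val) * f (k-1))
  rw [smul_eq_mul, pow_mul, pow_mul, h]
  ring

-- B * A⁻¹ = q^2 • (A⁻¹ * B) where A⁻¹ = opA q⁻¹ N
lemma hBAi {N : ℕ} [NeZero N] {q : ℂ} (hq0 : q ≠ 0) (hζ : (q^2)^N = 1) :
    opB N * opA q⁻¹ N = (q^2) • (opA q⁻¹ N * opB N) := by
  have hζi : ((q⁻¹)^2)^N = 1 := by
    rw [inv_pow, inv_pow, hζ, inv_one]
  apply end_ext; intro f k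
  have h := pow_val_succ hζi (k - 1)
  rw [sub_add_cancel] at h
  simp only [Module.End.mul_apply, LinearMap.smul_apply, opA_apply, opB_apply]
  show q⁻¹ ^ (2 * (k-1).val) * f (k-1) = (q^2) • (q⁻¹ ^ (2 * k.val) * f (k-1))
  rw [smul_eq_mul, pow_mul, pow_mul, h]
  have : (q:ℂ)^2 * (q⁻¹)^2 = 1 := by
    field_simp
  calc ((q⁻¹)^2)^(k-1).val * f (k-1)
      = (q^2 * (q⁻¹)^2) * (((q⁻¹)^2)^(k-1).val * f (k-1)) := by rw [this, one_mul]
    _ = q^2 * ((q⁻¹)^2 * ((q⁻¹)^2)^(k-1).val * f (k-1)) := by ring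

lemma hA_mul_Ai {N : ℕ} {q : ℂ} (hq0 : q ≠ 0) :
    opA q N * opA q⁻¹ N = 1 := by
  apply end_ext; intro f k
  show q ^ (2*k.val) * (q⁻¹ ^ (2*k.val) * f k) = f k
  rw [← mul_assoc, ← mul_pow, mul_inv_cancel₀ hq0, one_pow, one_mul]

lemma hAi_mul_A {N : ℕ} {q : ℂ} (hq0 : q ≠ 0) :
    opA q⁻¹ N * opA q N = 1 := by
  apply end_ext; intro f k
  show q⁻¹ ^ (2*k.val) * (q ^ (2*k.val) * f k) = f k
  rw [← mul_assoc, ← mul_pow, inv_mul_cancel₀ hq0, one_pow, one_mul]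

lemma hB_mul_Bi {N : ℕ} : opB N * opBi N = 1 := by
  apply end_ext; intro f k
  show f (k - 1 + 1) = f k
  rw [sub_add_cancel]

lemma hBi_mul_B {N : ℕ} : opBi N * opB N = 1 := by
  apply end_ext; intro f k
  show f (k + 1 - 1) = f k
  rw [add_sub_cancel_right]

lemma opA_pow {N : ℕ} (q : ℂ) : ∀ n : ℕ, (opA q N)^n = opA (q^n) N
  | 0 => by
      apply end_ext; intro f k
      show f k = 1 ^ (2*k.val) * f k
      rw [one_pow, one_mul]
  | n+1 => by
      rw [pow_succ, opA_pow q n]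
      apply end_ext; intro f k
      show (q^n) ^ (2*k.val) * (q ^ (2*k.val) * f k) = (q^(n+1)) ^ (2*k.val) * f k
      rw [pow_succ, mul_pow, ← mul_assoc]

lemma opA_one {N : ℕ} {q : ℂ} (h : q^2 = 1) : opA q N = 1 := by
  apply end_ext; intro f k
  show q ^ (2*k.val) * f k = f k
  rw [pow_mul, h, one_pow, one_mul]

lemma opB_pow {N : ℕ} : ∀ (n : ℕ) (f : CN N) (k : ZMod N), ((opB N)^n) f k = f (k - n)
  | 0, f, k => by simp
  | n+1, f, k => by
      rw [pow_succ', Module.End.mul_apply, opB_apply, opB_pow n]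
      congr 1
      push_cast
      ring

lemma opBi_pow {N : ℕ} : ∀ (n : ℕ) (f : CN N) (k : ZMod N), ((opBi N)^n) f k = f (k + n)
  | 0, f, k => by simp
  | n+1, f, k => by
      rw [pow_succ', Module.End.mul_apply, opBi_apply, opBi_pow n]
      congr 1
      push_cast
      ring

lemma opB_pow_N {N : ℕ} : (opB N)^N = 1 := by
  apply end_ext; intro f k
  rw [opB_pow]
  show f (k - N) = f k
  rw [ZMod.natCast_self, sub_zero]

lemma opBi_pow_N {N : ℕ} : (opBi N)^N = 1 := by
  apply end_ext; intro f k
  rw [opBi_pow]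
  show f (k + N) = f k
  rw [ZMod.natCast_self, add_zero]


lemma prod_zmod {N : ℕ} [NeZero N] (g : ZMod N → ℂ) (k : ZMod N) :
    ∏ j ∈ range N, g (k + (j : ZMod N)) = ∏ m : ZMod N, g m := by
  refine Finset.prod_bij' (fun j _ => k + (j : ZMod N)) (fun m _ => (m - k).val)
    (fun a _ => Finset.mem_univ _) (fun a _ => Finset.mem_range.2 (ZMod.val_lt _))
    ?_ ?_ (fun a _ => rfl)
  · intro a ha
    show ((k + (a:ZMod N)) - k).val = a
    rw [add_sub_cancel_left, ZMod.val_cast_of_lt (Finset.mem_range.1 ha)]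
  · intro a _
    show k + ((((a - k).val : ℕ)) : ZMod N) = a
    rw [ZMod.natCast_rightInverse (a - k), add_sub_cancel]

lemma sum_zmod_val {N : ℕ} [NeZero N] :
    ∑ m : ZMod N, m.val = ∑ j ∈ range N, j := by
  symm
  refine Finset.sum_bij' (fun j _ => ((j : ZMod N))) (fun m _ => m.val)
    (fun a _ => Finset.mem_univ _) (fun a _ => Finset.mem_range.2 (ZMod.val_lt _))
    (fun a ha => ZMod.val_cast_of_lt (Finset.mem_range.1 ha))
    (fun a _ => ZMod.natCast_rightInverse a)
    (fun a ha => (ZMod.val_cast_of_lt (Finset.mem_range.1 ha)).symm)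

lemma opM_pow {N : ℕ} {q : ℂ} :
    ∀ (n : ℕ) (f : CN N) (k : ZMod N),
      ((opA q⁻¹ N * opBi N)^n) f k
        = (∏ j ∈ range n, (q⁻¹)^(2 * ((k + (j:ZMod N)).val))) * f (k + n)
  | 0, f, k => by simp
  | n+1, f, k => by
      have harg : (k + 1 : ZMod N) + (n : ZMod N) = k + ((n+1 : ℕ) : ZMod N) := by
        push_cast; ring
      have hprod : (∏ j ∈ range n, (q⁻¹:ℂ)^(2 * ((k + 1 + (j:ZMod N)).val)))
          = ∏ j ∈ range n, (q⁻¹:ℂ)^(2 * ((k + ((j+1 : ℕ):ZMod N)).val)) := by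
        refine Finset.prod_congr rfl fun j _ => ?_
        congr 3
        push_cast; ring
      rw [pow_succ', Module.End.mul_apply, Module.End.mul_apply, opA_apply, opBi_apply,
        opM_pow n, harg, hprod, prod_range_succ']
      simp only [Nat.cast_zero, add_zero]
      ring

lemma opM_pow_N {N : ℕ} [NeZero N] {q : ℂ} :
    (opA q⁻¹ N * opBi N)^N = ((q⁻¹)^(N*(N-1))) • (1 : Module.End ℂ (CN N)) := by
  apply end_ext; intro f k
  rw [opM_pow]
  show _ = (q⁻¹)^(N*(N-1)) * f k
  rw [ZMod.natCast_self, add_zero, prod_zmod (fun m => (q⁻¹)^(2 * m.val)) k,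
    Finset.prod_pow_eq_pow_sum, ← Finset.mul_sum, sum_zmod_val]
  congr 2
  have := Finset.sum_range_id_mul_two N
  omega



lemma tmap_smul_left {V W : Type*} [AddCommGroup V] [Module ℂ V] [AddCommGroup W] [Module ℂ W]
    (c : ℂ) (f : Module.End ℂ V) (g : Module.End ℂ W) :
    TensorProduct.map (c • f) g = c • TensorProduct.map f g := by
  apply TensorProduct.ext'; intro a b; simp [TensorProduct.smul_tmul']

lemma tmap_smul_right {V W : Type*} [AddCommGroup V] [Module ℂ V] [AddCommGroup W] [Module ℂ W]
    (c : ℂ) (f : Module.End ℂ V) (g : Module.End ℂ W) :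
    TensorProduct.map f (c • g) = c • TensorProduct.map f g := by
  apply TensorProduct.ext'; intro a b; simp [TensorProduct.tmul_smul]

lemma ring_inverse_eq' {M : Type*} [MonoidWithZero M] {a b : M}
    (h1 : a * b = 1) (h2 : b * a = 1) : Ring.inverse a = b := by
  rw [show a = ((⟨a, b, h1, h2⟩ : Mˣ) : M) from rfl, Ring.inverse_unit]
  rfl

lemma inverse_of_pow_smul_one {T : Type*} [AddCommGroup T] [Module ℂ T]
    {P : Module.End ℂ T} {c : ℂ} {N : ℕ} (hN : 1 ≤ N) (hc : c ≠ 0)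
    (hP : P ^ N = c • 1) :
    Ring.inverse P = c⁻¹ • P^(N-1) ∧ (Ring.inverse P)^N = c⁻¹ • (1 : Module.End ℂ T) := by
  have h1 : P * (c⁻¹ • P^(N-1)) = 1 := by
    rw [mul_smul_comm, ← pow_succ', Nat.sub_add_cancel hN, hP, smul_smul,
      inv_mul_cancel₀ hc, one_smul]
  have h2 : (c⁻¹ • P^(N-1)) * P = 1 := by
    rw [smul_mul_assoc, ← pow_succ, Nat.sub_add_cancel hN, hP, smul_smul,
      inv_mul_cancel₀ hc, one_smul]
  have hi := ring_inverse_eq' h1 h2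
  refine ⟨hi, ?_⟩
  rw [hi, smul_pow, ← pow_mul, mul_comm (N-1) N, pow_mul, hP, smul_pow, one_pow, smul_smul]
  congr 1
  have hcc : c ^ N = c * c^(N-1) := by rw [← pow_succ', Nat.sub_add_cancel hN]
  rw [inv_pow, hcc, mul_inv, mul_assoc, inv_mul_cancel₀ (pow_ne_zero _ hc), mul_one]

lemma lift_pow {V T : Type*} [AddCommGroup V] [Module ℂ V] [AddCommGroup T] [Module ℂ T]
    (CG : Submodule ℂ (V →ₗ[ℂ] T)) (R : Module.End ℂ T) (Yh : Module.End ℂ ↥CG)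
    (hYh : ∀ f : CG, ((Yh f : V →ₗ[ℂ] T)) = R ∘ₗ (f : V →ₗ[ℂ] T)) (n : ℕ) (c : ℂ)
    (hRn : R ^ n = c • 1) : Yh ^ n = c • (1 : Module.End ℂ ↥CG) := by
  have key : ∀ (m : ℕ) (f : CG), (((Yh ^ m) f : ↥CG) : V →ₗ[ℂ] T)
      = (R ^ m) ∘ₗ (f : V →ₗ[ℂ] T) := by
    intro m
    induction m with
    | zero =>
        intro f
        rw [pow_zero, pow_zero]
        show (((1 : Module.End ℂ ↥CG) f : ↥CG) : V →ₗ[ℂ] T) = _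
        exact LinearMap.ext fun w => rfl
    | succ m ih =>
        intro f
        rw [pow_succ, Module.End.mul_apply, ih (Yh f), hYh f, pow_succ,
          Module.End.mul_eq_comp, LinearMap.comp_assoc]
  apply LinearMap.ext; intro f
  apply Subtype.ext
  rw [key n f, hRn]
  show (c • (1 : Module.End ℂ T)) ∘ₗ (f : V →ₗ[ℂ] T)
      = (((c • (1 : Module.End ℂ ↥CG)) f : ↥CG) : V →ₗ[ℂ] T)
  rw [LinearMap.smul_comp]
  exact LinearMap.ext fun w => rfl


open TensorProduct in
theorem stmt18_main (N : ℕ) (hN : 1 ≤ N) (q : ℂ)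
    (hqN : q ^ N = (-1 : ℂ) ^ (N + 1)) (hq : IsPrimitiveRoot (q ^ 2) N)
    (u v u' v' u'' v'' : ℂ) (hu : u ≠ 0) (hv : v ≠ 0) (hu' : u' ≠ 0) (hv' : v' ≠ 0)
    (hreg : (u ^ N)⁻¹ * v' ^ N + v ^ N ≠ 0) :
    (TensorProduct.map (Ring.inverse (u • opA q N)) 1
        + TensorProduct.map (v • opB N) (Ring.inverse (v' • opB N))) ^ N
      = ((u ^ N)⁻¹ + v ^ N * (v' ^ N)⁻¹) • (1 : Module.End ℂ (CN N ⊗[ℂ] CN N)) ∧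
    (q⁻¹ • TensorProduct.map (v • opB N)
        (Ring.inverse (u' • opA q N) * Ring.inverse (v' • opB N))) ^ N
      = (v ^ N * (u' ^ N)⁻¹ * (v' ^ N)⁻¹) • (1 : Module.End ℂ (CN N ⊗[ℂ] CN N)) ∧
    ∀ Xh Yh : Module.End ℂ ↥(CGsub N (u • opA q N) (v • opB N) (u' • opA q N)
        (v' • opB N) (u'' • opA q N) (v'' • opB N)),
      (∀ f : (CGsub N (u • opA q N) (v • opB N) (u' • opA q N)
          (v' • opB N) (u'' • opA q N) (v'' • opB N)),
        (Xh f : CN N →ₗ[ℂ] CN N ⊗[ℂ] CN N) =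
          Ring.inverse (TensorProduct.map (Ring.inverse (u • opA q N)) 1
            + TensorProduct.map (v • opB N) (Ring.inverse (v' • opB N)))
            ∘ₗ (f : CN N →ₗ[ℂ] CN N ⊗[ℂ] CN N)) →
      (∀ f : (CGsub N (u • opA q N) (v • opB N) (u' • opA q N)
          (v' • opB N) (u'' • opA q N) (v'' • opB N)),
        (Yh f : CN N →ₗ[ℂ] CN N ⊗[ℂ] CN N) =
          (q⁻¹ • TensorProduct.map (v • opB N)
            (Ring.inverse (u' • opA q N) * Ring.inverse (v' • opB N)))
            ∘ₗ (f : CN N →ₗ[ℂ] CN N ⊗[ℂ] CN N)) →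
      Xh ^ N = ((u ^ N)⁻¹ + v ^ N * (v' ^ N)⁻¹)⁻¹ • (1 : Module.End ℂ _) ∧
      Yh ^ N = (v ^ N * (u' ^ N)⁻¹ * (v' ^ N)⁻¹) • (1 : Module.End ℂ _) := by
  haveI : NeZero N := ⟨by omega⟩
  have hζ1 : (q^2)^N = 1 := hq.pow_eq_one
  have hq0 : q ≠ 0 := by
    intro h
    rw [h] at hζ1
    simp [zero_pow (by omega : N ≠ 0)] at hζ1
  -- Ring.inverse computations
  have hiXu : Ring.inverse (u • opA q N) = u⁻¹ • opA q⁻¹ N :=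
    ring_inverse_eq'
      (by rw [smul_mul_smul_comm, hA_mul_Ai hq0, mul_inv_cancel₀ hu, one_smul])
      (by rw [smul_mul_smul_comm, hAi_mul_A hq0, inv_mul_cancel₀ hu, one_smul])
  have hiXu' : Ring.inverse (u' • opA q N) = u'⁻¹ • opA q⁻¹ N :=
    ring_inverse_eq'
      (by rw [smul_mul_smul_comm, hA_mul_Ai hq0, mul_inv_cancel₀ hu', one_smul])
      (by rw [smul_mul_smul_comm, hAi_mul_A hq0, inv_mul_cancel₀ hu', one_smul])
  have hiYv' : Ring.inverse (v' • opB N) = v'⁻¹ • opBi N :=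
    ring_inverse_eq'
      (by rw [smul_mul_smul_comm, hB_mul_Bi, mul_inv_cancel₀ hv', one_smul])
      (by rw [smul_mul_smul_comm, hBi_mul_B, inv_mul_cancel₀ hv', one_smul])
  have hcomm : (TensorProduct.map (v • opB N) (v'⁻¹ • opBi N))
      * (TensorProduct.map (u⁻¹ • opA q⁻¹ N) 1)
      = (q^2) • ((TensorProduct.map (u⁻¹ • opA q⁻¹ N) 1)
          * (TensorProduct.map (v • opB N) (v'⁻¹ • opBi N))) := by
    rw [← TensorProduct.map_mul, ← TensorProduct.map_mul, smul_mul_smul_comm,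
      hBAi hq0 hζ1, mul_one, smul_mul_smul_comm, one_mul]
    simp only [smul_smul, tmap_smul_left, tmap_smul_right]
    congr 1
    ring
  have hxN : (TensorProduct.map (u⁻¹ • opA q⁻¹ N)
        (1 : Module.End ℂ (CN N)))^N = (u^N)⁻¹ • 1 := by
    have h2 : ((q⁻¹)^N)^2 = 1 := by
      rw [← pow_mul, mul_comm N 2, pow_mul, inv_pow, inv_pow, hζ1, inv_one]
    rw [TensorProduct.map_pow, smul_pow, opA_pow, opA_one h2]
    simp [tmap_smul_left, inv_pow]
  have hyN : (TensorProduct.map (v • opB N) (v'⁻¹ • opBi N))^N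
      = (v^N * (v'^N)⁻¹) • 1 := by
    rw [TensorProduct.map_pow, smul_pow, smul_pow, opB_pow_N, opBi_pow_N,
      tmap_smul_left, tmap_smul_right, TensorProduct.map_one, smul_smul, inv_pow]
  have hPN : (TensorProduct.map (Ring.inverse (u • opA q N)) 1
        + TensorProduct.map (v • opB N) (Ring.inverse (v' • opB N))) ^ N
      = ((u ^ N)⁻¹ + v ^ N * (v' ^ N)⁻¹) • (1 : Module.End ℂ (CN N ⊗[ℂ] CN N)) := by
    have hbin := qbinom (R := Module.End ℂ (CN N ⊗[ℂ] CN N)) hN hq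
      (TensorProduct.map (u⁻¹ • opA q⁻¹ N) 1)
      (TensorProduct.map (v • opB N) (v'⁻¹ • opBi N)) (by exact hcomm)
    rw [hiXu, hiYv', hbin, hxN, hyN, ← add_smul]
  -- the Q operator
  have hqNN : q^(N*N) = 1 := by
    rw [pow_mul, hqN, ← pow_mul]
    exact Even.neg_one_pow (by rw [Nat.mul_comm]; exact Nat.even_mul_succ_self N)
  have hq2 : (q⁻¹)^N * (q⁻¹)^(N*(N-1)) = 1 := by
    rw [← pow_add, show N + N*(N-1) = N*N by
      cases N with
      | zero => omega
      | succ m => simp [Nat.succ_sub_one]; ring]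
    rw [inv_pow, hqNN, inv_one]
  have hQN : (q⁻¹ • TensorProduct.map (v • opB N)
        (Ring.inverse (u' • opA q N) * Ring.inverse (v' • opB N))) ^ N
      = (v ^ N * (u' ^ N)⁻¹ * (v' ^ N)⁻¹) • (1 : Module.End ℂ (CN N ⊗[ℂ] CN N)) := by
    rw [hiXu', hiYv', smul_mul_smul_comm, tmap_smul_right, tmap_smul_left,
      smul_smul, smul_smul, smul_pow, TensorProduct.map_pow, opB_pow_N,
      opM_pow_N, tmap_smul_right, TensorProduct.map_one, smul_smul]
    congr 1
    rw [mul_pow, mul_pow, mul_pow, inv_pow u', inv_pow v']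
    linear_combination ((u'^N)⁻¹ * (v'^N)⁻¹ * v^N) * hq2
  refine ⟨hPN, hQN, ?_⟩
  intro Xh Yh hXh hYh
  have hc : ((u^N)⁻¹ + v^N*(v'^N)⁻¹) ≠ 0 := by
    have hv'N : (v'^N) ≠ 0 := pow_ne_zero _ hv'
    have : (u^N)⁻¹ + v^N*(v'^N)⁻¹ = ((u^N)⁻¹*v'^N + v^N) * (v'^N)⁻¹ := by
      field_simp
    rw [this]
    exact mul_ne_zero hreg (inv_ne_zero hv'N)
  obtain ⟨hPi, hPiN⟩ := inverse_of_pow_smul_one hN hc hPN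
  exact ⟨lift_pow _ _ Xh hXh N _ hPiN, lift_pow _ _ Yh hYh N _ hQN⟩

end Stmt18Aux

/-- assuming moreover q^N = (-1)^{N+1}, the operators P and Q of a
regular pair satisfy P^N = (x_μ⁻¹ + y_μy_ν⁻¹)·Id and Q^N = (y_μx_ν⁻¹y_ν⁻¹)·Id,
so the induced operators X̂ : f ↦ P⁻¹∘f and Ŷ : f ↦ Q∘f on the Clebsch–Gordan
space satisfy X̂^N = (x_μ⁻¹ + y_μy_ν⁻¹)⁻¹·Id and Ŷ^N = (y_μx_ν⁻¹y_ν⁻¹)·Id. -/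
theorem stmt18 (N : ℕ) (hN : 1 ≤ N) (q : ℂ)
    (hqN : q ^ N = (-1 : ℂ) ^ (N + 1)) (hq : IsPrimitiveRoot (q ^ 2) N)
    (u v u' v' u'' v'' : ℂ) (hu : u ≠ 0) (hv : v ≠ 0) (hu' : u' ≠ 0) (hv' : v' ≠ 0)
    (hu'' : u'' ≠ 0) (hv'' : v'' ≠ 0)
    (hreg : (u ^ N)⁻¹ * v' ^ N + v ^ N ≠ 0)
    (hx : u'' ^ N = u ^ N * u' ^ N) (hy : v'' ^ N = (u ^ N)⁻¹ * v' ^ N + v ^ N) :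
    let Xμ : Module.End ℂ (CN N) := u • opA q N
    let Yμ : Module.End ℂ (CN N) := v • opB N
    let Xν : Module.End ℂ (CN N) := u' • opA q N
    let Yν : Module.End ℂ (CN N) := v' • opB N
    let Xμν : Module.End ℂ (CN N) := u'' • opA q N
    let Yμν : Module.End ℂ (CN N) := v'' • opB N
    let CG := CGsub N Xμ Yμ Xν Yν Xμν Yμν
    let P : Module.End ℂ (CN N ⊗[ℂ] CN N) :=
      TensorProduct.map (Ring.inverse Xμ) 1 + TensorProduct.map Yμ (Ring.inverse Yν)
    let Q : Module.End ℂ (CN N ⊗[ℂ] CN N) :=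
      q⁻¹ • TensorProduct.map Yμ (Ring.inverse Xν * Ring.inverse Yν)
    P ^ N = ((u ^ N)⁻¹ + v ^ N * (v' ^ N)⁻¹) • (1 : Module.End ℂ (CN N ⊗[ℂ] CN N)) ∧
    Q ^ N = (v ^ N * (u' ^ N)⁻¹ * (v' ^ N)⁻¹) • (1 : Module.End ℂ (CN N ⊗[ℂ] CN N)) ∧
    ∀ Xh Yh : Module.End ℂ ↥CG,
      (∀ f : CG, (Xh f : CN N →ₗ[ℂ] CN N ⊗[ℂ] CN N) =
        Ring.inverse P ∘ₗ (f : CN N →ₗ[ℂ] CN N ⊗[ℂ] CN N)) →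
      (∀ f : CG, (Yh f : CN N →ₗ[ℂ] CN N ⊗[ℂ] CN N) =
        Q ∘ₗ (f : CN N →ₗ[ℂ] CN N ⊗[ℂ] CN N)) →
      Xh ^ N = ((u ^ N)⁻¹ + v ^ N * (v' ^ N)⁻¹)⁻¹ • (1 : Module.End ℂ ↥CG) ∧
      Yh ^ N = (v ^ N * (u' ^ N)⁻¹ * (v' ^ N)⁻¹) • (1 : Module.End ℂ ↥CG) := by
  intro Xμ Yμ Xν Yν Xμν Yμν CG P Q
  exact Stmt18Aux.stmt18_main N hN q hqN hq u v u' v' u'' v'' hu hv hu' hv' hreg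

end
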